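/- For arbitrary positive costs c, let OR be the function with OR(a) = 1 if a i = true for some i and OR(a) = 0 otherwise, and let j₁,…,j_n list the indices in nondecreasing order of c i / p i. Then OPT(OR) = Σ_{t=1}^{n} c(j_t)·∏_{s<t} (1 − p(j_s)); that is, the nonadaptive strategy querying bits in nondecreasing order of c i / p i until a true bit is found (or all bits are queried) is optimal among all decision trees evaluating OR. -/

import Mathlib

open Finset

/-- Number of true bits of an assignment. -/
def N1 {n : ℕ} (a : Fin n → Bool) : ℕ :=
  (Finset.univ.filter (fun i => a i = true)).card

/-- Probability of an assignment. -/
noncomputable def pr {n : ℕ} (p : Fin n → ℝ) (a : Fin n → Bool) : ℝ :=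
  ∏ i, if a i then p i else 1 - p i
/-- Binary decision trees over `n` bits, with natural-number leaf labels. -/
inductive DTree (n : ℕ) : Type where
  | leaf : ℕ → DTree n
  | node : Fin n → DTree n → DTree n → DTree n

namespace DTree

/-- Output of the tree on assignment `a`. -/
def eval {n : ℕ} : DTree n → (Fin n → Bool) → ℕ
  | .leaf v, _ => v
  | .node i t0 t1, a => if a i then eval t1 a else eval t0 a

/-- Total cost of the queries made on assignment `a`. -/
noncomputable def cost {n : ℕ} (c : Fin n → ℝ) : DTree n → (Fin n → Bool) → ℝ
  | .leaf _, _ => 0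
  | .node i t0 t1, a => c i + (if a i then cost c t1 a else cost c t0 a)

/-- The list of indices queried on assignment `a`, in order. -/
def path {n : ℕ} : DTree n → (Fin n → Bool) → List (Fin n)
  | .leaf _, _ => []
  | .node i t0 t1, a => i :: (if a i then path t1 a else path t0 a)

/-- No index occurs twice on any root-to-leaf path (given already-used indices). -/
def Proper {n : ℕ} : DTree n → Finset (Fin n) → Prop
  | .leaf _, _ => True
  | .node i t0 t1, used =>
      i ∉ used ∧ Proper t0 (insert i used) ∧ Proper t1 (insert i used)

/-- Every root-to-leaf path queries all `n` indices (and no repeats). -/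
def Full {n : ℕ} : DTree n → Finset (Fin n) → Prop
  | .leaf _, used => used = Finset.univ
  | .node i t0 t1, used =>
      i ∉ used ∧ Full t0 (insert i used) ∧ Full t1 (insert i used)

end DTree
/-- Expected-cost-minimizing value over all decision trees evaluating `h`. -/
noncomputable def OPTcost {n : ℕ} (p c : Fin n → ℝ) (h : (Fin n → Bool) → ℕ) : ℝ :=
  sInf {x : ℝ | ∃ T : DTree n, T.Proper ∅ ∧ (∀ a, T.eval a = h a) ∧
    x = ∑ a : Fin n → Bool, T.cost c a * pr p a}

/-- `chainCost c q [j₁,…,jₘ] = Σ_t c jₜ · Π_{s<t} q jₛ`: expected cost of querying the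
listed bits in order, continuing past each bit with probability `q` of that bit. -/
noncomputable def chainCost {n : ℕ} (c q : Fin n → ℝ) : List (Fin n) → ℝ
  | [] => 0
  | i :: l => c i + q i * chainCost c q l

lemma sum_pr {n : ℕ} (p : Fin n → ℝ) : ∑ a : Fin n → Bool, pr p a = 1 := by
  have h := (Fintype.prod_sum (fun (i : Fin n) (b : Bool) => if b then p i else 1 - p i)).symm
  simp only [pr]
  rw [h]
  simp

lemma pr_update_true {n : ℕ} (p : Fin n → ℝ) (a : Fin n → Bool) (i : Fin n)
    (ha : a i = false) :
    pr p (Function.update a i true) * (1 - p i) = pr p a * p i := by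
  have key : ∀ b : Bool, pr p (Function.update a i b)
      = (if b then p i else 1 - p i) * ∏ j ∈ univ.erase i, (if a j then p j else 1 - p j) := by
    intro b
    rw [pr, ← Finset.mul_prod_erase univ _ (mem_univ i)]
    simp only [Function.update_self]
    congr 1
    apply Finset.prod_congr rfl
    intro j hj
    rw [Function.update_of_ne (Finset.ne_of_mem_erase hj)]
  have h1 := key true
  have h2 : pr p a = (1 - p i) * ∏ j ∈ univ.erase i, (if a j then p j else 1 - p j) := by
    have := key (a i)
    rwa [Function.update_eq_self, ha] at this
  norm_num at h1
  rw [h1, h2]; ring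

lemma fiber_split {n : ℕ} (p : Fin n → ℝ) (hp : ∀ i, 0 < p i ∧ p i < 1) (i : Fin n)
    (F : (Fin n → Bool) → ℝ) (hF : ∀ a b, F (Function.update a i b) = F a) :
    (∑ a ∈ univ.filter (fun a : Fin n → Bool => a i = true), F a * pr p a
      = p i * ∑ a : Fin n → Bool, F a * pr p a) ∧
    (∑ a ∈ univ.filter (fun a : Fin n → Bool => a i = false), F a * pr p a
      = (1 - p i) * ∑ a : Fin n → Bool, F a * pr p a) := by
  set X := ∑ a ∈ univ.filter (fun a : Fin n → Bool => a i = false), F a * pr p a with hX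
  set Y := ∑ a ∈ univ.filter (fun a : Fin n → Bool => a i = true), F a * pr p a with hY
  set S := ∑ a : Fin n → Bool, F a * pr p a with hS
  have hsplit : Y + X = S := by
    rw [hY, hX, hS]
    rw [← Finset.sum_filter_add_sum_filter_not univ (fun a : Fin n → Bool => a i = true)
      (fun a => F a * pr p a)]
    congr 1
    apply Finset.sum_congr _ (fun _ _ => rfl)
    apply Finset.filter_congr
    intro a _
    simp
  have hbij : Y * (1 - p i) = X * p i := by
    have : Y = ∑ a ∈ univ.filter (fun a : Fin n → Bool => a i = false),
        F (Function.update a i true) * pr p (Function.update a i true) := by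
      rw [hY]
      apply Finset.sum_nbij' (fun a => Function.update a i false)
        (fun a => Function.update a i true)
      · intro a ha; simp
      · intro a ha; simp
      · intro a ha
        simp only [mem_filter, mem_univ, true_and] at ha
        simp [Function.update_idem, ← ha, Function.update_eq_self]
      · intro a ha
        simp only [mem_filter, mem_univ, true_and] at ha
        simp [Function.update_idem, ← ha, Function.update_eq_self]
      · intro a ha
        simp only [mem_filter, mem_univ, true_and] at ha
        rw [Function.update_idem, ← ha, Function.update_eq_self]
    rw [this, Finset.sum_mul]
    rw [hX, Finset.sum_mul]
    apply Finset.sum_congr rfl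
    intro a ha
    simp only [mem_filter, mem_univ, true_and] at ha
    rw [hF, mul_assoc, mul_assoc, pr_update_true p a i ha]
  have h1 : 1 - p i ≠ 0 := by have := (hp i).2; intro h; linarith [this]
  have hYS : Y = p i * S := by linear_combination hbij + p i * hsplit
  exact ⟨hYS, by linarith⟩

namespace DTree

noncomputable def ecost {n : ℕ} (p c : Fin n → ℝ) : DTree n → ℝ
  | .leaf _ => 0
  | .node i t0 t1 => c i + p i * ecost p c t1 + (1 - p i) * ecost p c t0

def fpath {n : ℕ} : DTree n → List (Fin n)
  | .leaf _ => []
  | .node i t0 _ => i :: fpath t0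

def chain {n : ℕ} : List (Fin n) → DTree n
  | [] => .leaf 0
  | i :: m => .node i (chain m) (.leaf 1)

lemma cost_indep {n : ℕ} (c : Fin n → ℝ) :
    ∀ (T : DTree n) (used : Finset (Fin n)), T.Proper used →
      ∀ (a : Fin n → Bool) (i : Fin n), i ∈ used → ∀ (b : Bool),
        T.cost c (Function.update a i b) = T.cost c a := by
  intro T
  induction T with
  | leaf v => intro used _ a i hi b; rfl
  | node k t0 t1 ih0 ih1 =>
    intro used hP a i hi b
    obtain ⟨hk, h0, h1⟩ := hP
    have hne : k ≠ i := fun h => hk (h ▸ hi)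
    have hik : i ∈ insert k used := Finset.mem_insert_of_mem hi
    simp only [cost, Function.update_of_ne hne]
    rw [ih0 _ h0 a i hik b, ih1 _ h1 a i hik b]

lemma ecost_nonneg {n : ℕ} (p c : Fin n → ℝ)
    (hp : ∀ i, 0 < p i ∧ p i < 1) (hc : ∀ i, 0 < c i) (T : DTree n) :
    0 ≤ ecost p c T := by
  induction T with
  | leaf v => simp [ecost]
  | node k t0 t1 ih0 ih1 =>
    have h1 := (hp k).1; have h2 := (hp k).2; have h3 := hc k
    simp only [ecost]
    nlinarith

lemma sum_cost_eq_ecost {n : ℕ} (p c : Fin n → ℝ) (hp : ∀ i, 0 < p i ∧ p i < 1) :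
    ∀ (T : DTree n) (used : Finset (Fin n)), T.Proper used →
      ∑ a : Fin n → Bool, T.cost c a * pr p a = ecost p c T := by
  intro T
  induction T with
  | leaf v => intro used _; simp [cost, ecost]
  | node k t0 t1 ih0 ih1 =>
    intro used hP
    obtain ⟨hk, h0, h1⟩ := hP
    have split1 := fiber_split p hp k (fun a => t1.cost c a)
      (fun a b => cost_indep c t1 (insert k used) h1 a k (Finset.mem_insert_self k used) b)
    have split0 := fiber_split p hp k (fun a => t0.cost c a)
      (fun a b => cost_indep c t0 (insert k used) h0 a k (Finset.mem_insert_self k used) b)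
    have expand : ∑ a : Fin n → Bool, (node k t0 t1).cost c a * pr p a
        = c k * ∑ a : Fin n → Bool, pr p a
          + (∑ a ∈ univ.filter (fun a : Fin n → Bool => a k = true), t1.cost c a * pr p a
            + ∑ a ∈ univ.filter (fun a : Fin n → Bool => a k = false), t0.cost c a * pr p a) := by
      have lhs_eq : ∑ a : Fin n → Bool, (node k t0 t1).cost c a * pr p a
          = ∑ a : Fin n → Bool, (c k * pr p a)
            + ∑ a : Fin n → Bool, (if a k then t1.cost c a else t0.cost c a) * pr p a := by
        rw [← Finset.sum_add_distrib]
        apply Finset.sum_congr rfl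
        intro a _
        simp only [cost]
        ring
      rw [lhs_eq, ← Finset.mul_sum]
      congr 1
      have hfilter : ∑ a ∈ univ.filter (fun a : Fin n → Bool => a k = false),
          t0.cost c a * pr p a
          = ∑ a ∈ univ.filter (fun a : Fin n → Bool => ¬ (a k = true)),
            t0.cost c a * pr p a := by
        apply Finset.sum_congr _ (fun _ _ => rfl)
        apply Finset.filter_congr; intro a _; simp
      rw [hfilter, ← Finset.sum_filter_add_sum_filter_not univ
        (fun a : Fin n → Bool => a k = true)
        (fun a => (if a k then t1.cost c a else t0.cost c a) * pr p a)]
      congr 1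
      · apply Finset.sum_congr rfl; intro a ha
        simp only [mem_filter, mem_univ, true_and] at ha
        rw [if_pos ha]
      · apply Finset.sum_congr rfl; intro a ha
        simp only [mem_filter, mem_univ, true_and] at ha
        rw [if_neg ha]
    rw [expand, sum_pr, split1.1, split0.2, ih1 _ h1, ih0 _ h0]
    simp only [ecost]
    ring

lemma ecost_ge_chain {n : ℕ} (p c : Fin n → ℝ)
    (hp : ∀ i, 0 < p i ∧ p i < 1) (hc : ∀ i, 0 < c i) (T : DTree n) :
    chainCost c (fun j => 1 - p j) (fpath T) ≤ ecost p c T := by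
  induction T with
  | leaf v => simp [fpath, chainCost, ecost]
  | node k t0 t1 ih0 ih1 =>
    have h1 := (hp k).1; have h2 := (hp k).2
    have hn1 := ecost_nonneg p c hp hc t1
    have hq : (0:ℝ) ≤ 1 - p k := by linarith
    simp only [fpath, chainCost, ecost]
    nlinarith [mul_le_mul_of_nonneg_left ih0 hq]

lemma fpath_nodup {n : ℕ} :
    ∀ (T : DTree n) (used : Finset (Fin n)), T.Proper used →
      (fpath T).Nodup ∧ ∀ i ∈ fpath T, i ∉ used := by
  intro T
  induction T with
  | leaf v => intro used _; simp [fpath]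
  | node k t0 t1 ih0 ih1 =>
    intro used hP
    obtain ⟨hk, h0, _⟩ := hP
    obtain ⟨hnd, havoid⟩ := ih0 _ h0
    constructor
    · refine List.nodup_cons.2 ⟨fun hmem => ?_, hnd⟩
      exact havoid k hmem (Finset.mem_insert_self k used)
    · intro i hi
      rcases List.mem_cons.1 hi with rfl | hi
      · exact hk
      · exact fun hiu => havoid i hi (Finset.mem_insert_of_mem hiu)

lemma eval_congr {n : ℕ} :
    ∀ (T : DTree n) (a a' : Fin n → Bool),
      (∀ j ∈ T.path a, a j = a' j) → T.eval a' = T.eval a := by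
  intro T
  induction T with
  | leaf v => intro a a' _; rfl
  | node k t0 t1 ih0 ih1 =>
    intro a a' hagree
    have hk : a k = a' k := hagree k (by simp [path])
    simp only [eval, ← hk]
    cases hak : a k with
    | true =>
      apply ih1
      intro j hj
      exact hagree j (by simp [path, hak, hj])
    | false =>
      apply ih0
      intro j hj
      exact hagree j (by simp [path, hak, hj])

lemma path_false {n : ℕ} (T : DTree n) :
    T.path (fun _ => false) = fpath T := by
  induction T with
  | leaf v => rfl
  | node k t0 t1 ih0 ih1 => simp [path, fpath, ih0]

lemma fpath_complete {n : ℕ} (T : DTree n)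
    (heval : ∀ a, T.eval a = if ∃ i, a i = true then 1 else 0) (i : Fin n) :
    i ∈ fpath T := by
  by_contra hmem
  set a0 : Fin n → Bool := fun _ => false with ha0
  have h0 : T.eval a0 = 0 := by
    rw [heval]; simp [ha0]
  set a1 : Fin n → Bool := Function.update a0 i true with ha1
  have h1 : T.eval a1 = 1 := by
    rw [heval]
    rw [if_pos ⟨i, by simp [ha1]⟩]
  have : T.eval a1 = T.eval a0 := by
    apply eval_congr
    intro j hj
    rw [path_false] at hj
    have : j ≠ i := fun h => hmem (h ▸ hj)
    simp [ha1, Function.update_of_ne this]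
  omega

lemma chain_proper {n : ℕ} :
    ∀ (m : List (Fin n)) (used : Finset (Fin n)), m.Nodup →
      (∀ i ∈ m, i ∉ used) → (chain m).Proper used := by
  intro m
  induction m with
  | nil => intro used _ _; trivial
  | cons k m ih =>
    intro used hnd havoid
    refine ⟨havoid k (List.mem_cons_self), ?_, trivial⟩
    apply ih _ (List.nodup_cons.1 hnd).2
    intro i hi hins
    rcases Finset.mem_insert.1 hins with rfl | hiu
    · exact (List.nodup_cons.1 hnd).1 hi
    · exact havoid i (List.mem_cons_of_mem k hi) hiu

lemma chain_eval {n : ℕ} :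
    ∀ (m : List (Fin n)) (a : Fin n → Bool),
      (chain m).eval a = if ∃ i ∈ m, a i = true then 1 else 0 := by
  intro m
  induction m with
  | nil => intro a; simp [chain, eval]
  | cons k m ih =>
    intro a
    cases hak : a k with
    | true =>
      have hex : ∃ i ∈ k :: m, a i = true := ⟨k, List.mem_cons_self, hak⟩
      simp [chain, eval, hak, hex]
    | false =>
      have hiff : (∃ i ∈ k :: m, a i = true) ↔ (∃ i ∈ m, a i = true) := by
        constructor
        · rintro ⟨i, hi, hai⟩
          rcases List.mem_cons.1 hi with rfl | hi
          · simp [hak] at hai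
          · exact ⟨i, hi, hai⟩
        · rintro ⟨i, hi, hai⟩; exact ⟨i, List.mem_cons_of_mem k hi, hai⟩
      simp [chain, eval, hak, ih, hiff]

lemma chain_ecost {n : ℕ} (p c : Fin n → ℝ) :
    ∀ (m : List (Fin n)), ecost p c (chain m) = chainCost c (fun j => 1 - p j) m := by
  intro m
  induction m with
  | nil => simp [chain, ecost, chainCost]
  | cons k m ih => simp only [chain, ecost, chainCost, ih]; ring

end DTree

lemma chain_bubble {n : ℕ} (p c : Fin n → ℝ)
    (hp : ∀ i, 0 < p i ∧ p i < 1) (j : Fin n) :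
    ∀ (xs ys : List (Fin n)), (∀ x ∈ xs, c j * p x ≤ c x * p j) →
      chainCost c (fun i => 1 - p i) (j :: (xs ++ ys))
        ≤ chainCost c (fun i => 1 - p i) (xs ++ j :: ys) := by
  intro xs
  induction xs with
  | nil => intro ys _; simp
  | cons x xs ih =>
    intro ys hmin
    have hx : c j * p x ≤ c x * p j := hmin x (List.mem_cons_self)
    have hih : c j + (1 - p j) * chainCost c (fun i => 1 - p i) (xs ++ ys)
        ≤ chainCost c (fun i => 1 - p i) (xs ++ j :: ys) :=
      ih ys (fun y hy => hmin y (List.mem_cons_of_mem x hy))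
    have hqx : (0:ℝ) ≤ 1 - p x := by linarith [(hp x).2]
    have hqj : (0:ℝ) ≤ 1 - p j := by linarith [(hp j).2]
    have key : c j + (1 - p j) * (c x + (1 - p x) * chainCost c (fun i => 1 - p i) (xs ++ ys))
        ≤ c x + (1 - p x) * (c j + (1 - p j) * chainCost c (fun i => 1 - p i) (xs ++ ys)) := by
      nlinarith [hx]
    have step := mul_le_mul_of_nonneg_left hih hqx
    calc chainCost c (fun i => 1 - p i) (j :: (x :: xs ++ ys))
        = c j + (1 - p j) * (c x + (1 - p x) * chainCost c (fun i => 1 - p i) (xs ++ ys)) := by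
          simp [chainCost]
      _ ≤ c x + (1 - p x) * (c j + (1 - p j) * chainCost c (fun i => 1 - p i) (xs ++ ys)) := key
      _ ≤ c x + (1 - p x) * chainCost c (fun i => 1 - p i) (xs ++ j :: ys) := by linarith [step]
      _ = chainCost c (fun i => 1 - p i) (x :: xs ++ j :: ys) := by simp [chainCost]

lemma chain_perm_min {n : ℕ} (p c : Fin n → ℝ)
    (hp : ∀ i, 0 < p i ∧ p i < 1) :
    ∀ (l : List (Fin n)), l.Pairwise (fun i j => c i * p j ≤ c j * p i) →
      ∀ (m : List (Fin n)), m.Perm l →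
        chainCost c (fun i => 1 - p i) l ≤ chainCost c (fun i => 1 - p i) m := by
  intro l
  induction l with
  | nil => intro _ m hperm; rw [List.perm_nil.1 hperm]
  | cons j l ih =>
    intro hpw m hperm
    have hj : j ∈ m := hperm.mem_iff.2 (List.mem_cons_self)
    obtain ⟨xs, ys, rfl⟩ := List.append_of_mem hj
    have hperm' : (xs ++ ys).Perm l :=
      (List.perm_middle.symm.trans hperm).cons_inv
    have hmin : ∀ x ∈ xs, c j * p x ≤ c x * p j := by
      intro x hx
      have hxm : x ∈ xs ++ j :: ys := List.mem_append_left _ hx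
      have : x ∈ j :: l := hperm.mem_iff.1 hxm
      rcases List.mem_cons.1 this with rfl | hxl
      · exact le_refl _
      · exact (List.pairwise_cons.1 hpw).1 x hxl
    have hbub := chain_bubble p c hp j xs ys hmin
    have hih := ih (List.pairwise_cons.1 hpw).2 (xs ++ ys) hperm'
    have hqj : (0:ℝ) ≤ 1 - p j := by linarith [(hp j).2]
    calc chainCost c (fun i => 1 - p i) (j :: l)
        = c j + (1 - p j) * chainCost c (fun i => 1 - p i) l := rfl
      _ ≤ c j + (1 - p j) * chainCost c (fun i => 1 - p i) (xs ++ ys) := by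
          nlinarith [mul_le_mul_of_nonneg_left hih hqj]
      _ = chainCost c (fun i => 1 - p i) (j :: (xs ++ ys)) := rfl
      _ ≤ chainCost c (fun i => 1 - p i) (xs ++ j :: ys) := hbub

theorem stmt13 {n : ℕ} (hn : 1 ≤ n) (p c : Fin n → ℝ)
    (hp : ∀ i, 0 < p i ∧ p i < 1) (hc : ∀ i, 0 < c i)
    (l : List (Fin n))
    (hl : l.Nodup ∧ (∀ i, i ∈ l) ∧
      l.Pairwise (fun i j => c i / p i ≤ c j / p j)) :
    OPTcost p c (fun a => if ∃ i, a i = true then 1 else 0) =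
      chainCost c (fun j => 1 - p j) l := by
  obtain ⟨hnd, hmemall, hsorted⟩ := hl
  have hpw : l.Pairwise (fun i j => c i * p j ≤ c j * p i) := by
    refine hsorted.imp_of_mem ?_
    intro i j _ _ hij
    exact (div_le_div_iff₀ (hp i).1 (hp j).1).1 hij
  set S : Set ℝ := {x : ℝ | ∃ T : DTree n, T.Proper ∅ ∧
      (∀ a, T.eval a = (fun a => if ∃ i, a i = true then 1 else 0) a) ∧
      x = ∑ a : Fin n → Bool, T.cost c a * pr p a} with hSdef
  have hmem : chainCost c (fun j => 1 - p j) l ∈ S := by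
    refine ⟨DTree.chain l, ?_, ?_, ?_⟩
    · exact DTree.chain_proper l ∅ hnd (by simp)
    · intro a
      rw [DTree.chain_eval]
      congr 1
      simp only [eq_iff_iff]
      constructor
      · rintro ⟨i, _, hai⟩; exact ⟨i, hai⟩
      · rintro ⟨i, hai⟩; exact ⟨i, hmemall i, hai⟩
    · rw [DTree.sum_cost_eq_ecost p c hp (DTree.chain l) ∅
        (DTree.chain_proper l ∅ hnd (by simp)), DTree.chain_ecost]
  have hlb : ∀ x ∈ S, chainCost c (fun j => 1 - p j) l ≤ x := by
    rintro x ⟨T, hproper, heval, rfl⟩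
    rw [DTree.sum_cost_eq_ecost p c hp T ∅ hproper]
    have hperm : (DTree.fpath T).Perm l := by
      rw [List.perm_ext_iff_of_nodup (DTree.fpath_nodup T ∅ hproper).1 hnd]
      intro a
      simp only [DTree.fpath_complete T heval a, hmemall a]
    calc chainCost c (fun j => 1 - p j) l
        ≤ chainCost c (fun j => 1 - p j) (DTree.fpath T) :=
          chain_perm_min p c hp l hpw _ hperm
      _ ≤ DTree.ecost p c T := DTree.ecost_ge_chain p c hp hc T
  show sInf S = _
  apply le_antisymm
  · exact csInf_le ⟨_, hlb⟩ hmem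
  · exact le_csInf ⟨_, hmem⟩ hlb
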